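/- Let H be a real Hilbert space and A ⊆ H a nonempty bounded set with mDW(A) > 0 and 0 < radius(A) < ∞, where radius(A) := sup_{z∈A} ‖z‖. Let f : H → ℝ be Fréchet differentiable, convex, with L-Lipschitz gradient (L > 0), and μ-strongly convex (0 < μ ≤ L), i.e., f(v) ≥ f(u) + ⟪∇f(u), v − u⟫ + (μ/2)‖v − u‖² for all u, v ∈ H. Let x⋆ minimize f over the closure of span(A), let δ ∈ (0,1], and let (x_t)_{t≥0} be a sequence with x₀ ∈ span(A) such that for every t there is z_t ∈ A with ⟪∇f(x_t), z_t⟫ ≤ δ·inf_{z∈A} ⟪∇f(x_t), z⟫ (a δ-approximate matching-pursuit LMO output), and x_{t+1} = x_t − (⟪∇f(x_t), z_t⟫/(L‖z_t‖²))·z_t if z_t ≠ 0, and x_{t+1} = x_t if z_t = 0. Then for every t ≥ 0, the suboptimality ε_t := f(x_t) − f(x⋆) satisfies ε_{t+1} ≤ (1 − δ²·μ·mDW(A)²/(L·radius(A)²))·ε_t. -/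

import Mathlib

open scoped RealInnerProductSpace Pointwise Classical

/-- Directional width of a set `A` in direction `d`: `W_A(d) = sup_{z ∈ A} ⟪d / ‖d‖, z⟫`. -/
noncomputable def dirWidth {H : Type*} [NormedAddCommGroup H] [InnerProductSpace ℝ H]
    (A : Set H) (d : H) : ℝ :=
  sSup ((fun z => ⟪(‖d‖)⁻¹ • d, z⟫) '' A)

/-- Minimal intrinsic directional width of `A`: the infimum of `W_A(d)` over nonzero
directions `d` in the linear span of `A`. -/
noncomputable def mDW {H : Type*} [NormedAddCommGroup H] [InnerProductSpace ℝ H]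
    (A : Set H) : ℝ :=
  sInf (dirWidth A '' {d | d ∈ Submodule.span ℝ A ∧ d ≠ 0})

section Aux
variable {H : Type*} [NormedAddCommGroup H] [InnerProductSpace ℝ H]

lemma norm_le_rad (A : Set H) (hAbdd : Bornology.IsBounded A) :
    BddAbove ((fun w : H => ‖w‖) '' A) := by
  obtain ⟨C, hC⟩ := (isBounded_iff_forall_norm_le).1 hAbdd
  exact ⟨C, by rintro _ ⟨w, hw, rfl⟩; exact hC w hw⟩

lemma inner_bddAbove (A : Set H) (hAbdd : Bornology.IsBounded A) (d : H) :
    BddAbove ((fun w => ⟪d, w⟫) '' A) := by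
  obtain ⟨C, hC⟩ := (isBounded_iff_forall_norm_le).1 hAbdd
  refine ⟨‖d‖ * C, ?_⟩
  rintro _ ⟨w, hw, rfl⟩
  calc ⟪d, w⟫ ≤ ‖d‖ * ‖w‖ := real_inner_le_norm d w
    _ ≤ ‖d‖ * C := by
        have := hC w hw
        nlinarith [norm_nonneg d, norm_nonneg w]

lemma width_bound (A : Set H) (hA : A.Nonempty) (hAbdd : Bornology.IsBounded A)
    (hrad : 0 < sSup ((fun w : H => ‖w‖) '' A)) :
    ∀ d ∈ closure ((Submodule.span ℝ A : Submodule ℝ H) : Set H),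
      mDW A * ‖d‖ ≤ sSup ((fun w => ⟪d, w⟫) '' A) := by
  set R := sSup ((fun w : H => ‖w‖) '' A) with hR
  set W := mDW A with hWdef
  set S : H → ℝ := fun d => sSup ((fun w => ⟪d, w⟫) '' A) with hS
  have hRz : ∀ w ∈ A, ‖w‖ ≤ R := fun w hw =>
    le_csSup (norm_le_rad A hAbdd) ⟨w, hw, rfl⟩
  have hR0 : 0 ≤ R := hrad.le
  have hstep : ∀ d e : H, S d ≤ S e + R * ‖d - e‖ := by
    intro d e
    apply csSup_le (hA.image _)
    rintro _ ⟨w, hw, rfl⟩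
    have h1 : ⟪e, w⟫ ≤ S e := le_csSup (inner_bddAbove A hAbdd e) ⟨w, hw, rfl⟩
    have h2 : ⟪d - e, w⟫ ≤ ‖d - e‖ * ‖w‖ := real_inner_le_norm _ _
    have h3 : ‖w‖ ≤ R := hRz w hw
    have h4 : ⟪d, w⟫ = ⟪e, w⟫ + ⟪d - e, w⟫ := by
      rw [← inner_add_left]; norm_num
    nlinarith [norm_nonneg (d - e)]
  have hScont : Continuous S := by
    have : LipschitzWith R.toNNReal S := by
      apply LipschitzWith.of_dist_le_mul
      intro d e
      rw [Real.dist_eq, Real.coe_toNNReal R hR0, dist_eq_norm, abs_sub_le_iff]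
      constructor
      · have := hstep d e; linarith
      · have := hstep e d
        rw [show ‖e - d‖ = ‖d - e‖ from norm_sub_rev e d] at this
        linarith
    exact this.continuous
  have hclosed : IsClosed {d : H | W * ‖d‖ ≤ S d} :=
    isClosed_le (by continuity) hScont
  have hsub : ((Submodule.span ℝ A : Submodule ℝ H) : Set H) ⊆ {d : H | W * ‖d‖ ≤ S d} := by
    intro d hd
    show W * ‖d‖ ≤ S d
    by_cases hd0 : d = 0
    · subst hd0
      obtain ⟨w0, hw0⟩ := hA
      have h0 : (0:ℝ) ≤ S 0 := by
        have h : ⟪(0:H), w0⟫ ≤ S 0 := le_csSup (inner_bddAbove A hAbdd 0) ⟨w0, hw0, rfl⟩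
        calc (0:ℝ) = ⟪(0:H), w0⟫ := (inner_zero_left w0).symm
          _ ≤ S 0 := h
      simpa using h0
    · have hdn : 0 < ‖d‖ := norm_pos_iff.2 hd0
      have hbb : BddBelow (dirWidth A '' {e : H | e ∈ Submodule.span ℝ A ∧ e ≠ 0}) := by
        obtain ⟨w0, hw0⟩ := hA
        refine ⟨-R, ?_⟩
        rintro _ ⟨e, ⟨he, hene⟩, rfl⟩
        have hu : ‖(‖e‖)⁻¹ • e‖ = 1 := by
          rw [norm_smul, Real.norm_eq_abs, abs_of_nonneg (inv_nonneg.2 (norm_nonneg e)),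
            inv_mul_cancel₀ (norm_ne_zero_iff.2 hene)]
        have h1 : ⟪(‖e‖)⁻¹ • e, w0⟫ ≤ dirWidth A e :=
          le_csSup (inner_bddAbove A hAbdd _) ⟨w0, hw0, rfl⟩
        have h2 : |⟪(‖e‖)⁻¹ • e, w0⟫| ≤ ‖(‖e‖)⁻¹ • e‖ * ‖w0‖ := abs_real_inner_le_norm _ _
        rw [hu, one_mul] at h2
        have h3 := hRz w0 hw0
        have := abs_le.1 h2
        linarith
      have hWd : W ≤ dirWidth A d := csInf_le hbb ⟨d, ⟨hd, hd0⟩, rfl⟩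
      have hdw : dirWidth A d ≤ S d / ‖d‖ := by
        apply csSup_le (hA.image _)
        rintro _ ⟨w, hw, rfl⟩
        have h1 : ⟪d, w⟫ ≤ S d := le_csSup (inner_bddAbove A hAbdd d) ⟨w, hw, rfl⟩
        show ⟪(‖d‖)⁻¹ • d, w⟫ ≤ S d / ‖d‖
        rw [real_inner_smul_left, div_eq_inv_mul]
        exact mul_le_mul_of_nonneg_left h1 (inv_nonneg.2 hdn.le)
      have := mul_le_mul_of_nonneg_right (hWd.trans hdw) hdn.le
      rw [div_mul_cancel₀ _ hdn.ne'] at this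
      exact this
  intro d hd
  exact closure_minimal hsub hclosed hd

variable [CompleteSpace H]

lemma hasDerivAt_comp_line (f : H → ℝ) (f' : H → H)
    (hdiff : ∀ w, HasGradientAt f (f' w) w) (x u : H) (s : ℝ) :
    HasDerivAt (fun s : ℝ => f (x + s • u)) ⟪f' (x + s • u), u⟫ s := by
  have hc : HasDerivAt (fun s : ℝ => x + s • u) u s := by
    simpa using ((hasDerivAt_id s).smul_const u).const_add x
  have := ((hdiff (x + s • u)).hasFDerivAt.comp_hasDerivAt s hc)
  exact this

lemma descent_lemma (L : ℝ) (hL : 0 < L) (f : H → ℝ) (f' : H → H)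
    (hdiff : ∀ w, HasGradientAt f (f' w) w)
    (hLip : ∀ u v : H, ‖f' u - f' v‖ ≤ L * ‖u - v‖) (x u : H) :
    f (x + u) ≤ f x + ⟪f' x, u⟫ + L / 2 * ‖u‖ ^ 2 := by
  set χ : ℝ → ℝ := fun s => L * s ^ 2 / 2 * ‖u‖ ^ 2 + s * ⟪f' x, u⟫ - f (x + s • u) with hχ
  have hderiv : ∀ s : ℝ, HasDerivAt χ
      (L * s * ‖u‖ ^ 2 + ⟪f' x, u⟫ - ⟪f' (x + s • u), u⟫) s := by
    intro s
    have h1 : HasDerivAt (fun s : ℝ => L * s ^ 2 / 2 * ‖u‖ ^ 2 + s * ⟪f' x, u⟫)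
        (L * s * ‖u‖ ^ 2 + ⟪f' x, u⟫) s := by
      have ha := (((hasDerivAt_pow 2 s).const_mul L).div_const 2).mul_const (‖u‖ ^ 2)
      have hb := (hasDerivAt_id s).mul_const (⟪f' x, u⟫ : ℝ)
      exact (ha.add hb).congr_deriv (by ring)
    exact h1.sub (hasDerivAt_comp_line f f' hdiff x u s)
  have hmono : MonotoneOn χ (Set.Icc (0:ℝ) 1) := by
    apply monotoneOn_of_deriv_nonneg (convex_Icc 0 1)
      (fun s _ => (hderiv s).continuousAt.continuousWithinAt)
      (fun s _ => ((hderiv s).differentiableAt).differentiableWithinAt)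
    intro s hs
    rw [interior_Icc] at hs
    rw [(hderiv s).deriv]
    have h2 : ⟪f' (x + s • u) - f' x, u⟫ ≤ ‖f' (x + s • u) - f' x‖ * ‖u‖ :=
      real_inner_le_norm _ _
    have h3 : ‖f' (x + s • u) - f' x‖ ≤ L * ‖s • u‖ := by
      simpa using hLip (x + s • u) x
    have h4 : ‖s • u‖ = s * ‖u‖ := by
      rw [norm_smul, Real.norm_eq_abs, abs_of_pos hs.1]
    have h5 : ⟪f' (x + s • u) - f' x, u⟫ = ⟪f' (x + s • u), u⟫ - ⟪f' x, u⟫ := by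
      rw [inner_sub_left]
    have h6 := mul_le_mul_of_nonneg_right h3 (norm_nonneg u)
    rw [h4] at h6
    nlinarith [norm_nonneg u, hs.1.le]
  have h01 := hmono (Set.mem_Icc.2 ⟨le_refl 0, zero_le_one⟩)
    (Set.mem_Icc.2 ⟨zero_le_one, le_refl 1⟩) zero_le_one
  have hχ0 : χ 0 = -f x := by simp [hχ]
  have hχ1 : χ 1 = L / 2 * ‖u‖ ^ 2 + ⟪f' x, u⟫ - f (x + u) := by
    simp [hχ]
  rw [hχ0, hχ1] at h01
  linarith

end Aux

/-- Linear convergence of Generalized Matching Pursuit for smooth, strongly convex objectives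
(Theorem 3 / `thm:linearRateMPinexact`). -/
theorem matchingPursuit_linear_convergence
    {H : Type*} [NormedAddCommGroup H] [InnerProductSpace ℝ H] [CompleteSpace H]
    (A : Set H) (hA : A.Nonempty) (hAbdd : Bornology.IsBounded A)
    (hmdw : 0 < mDW A)
    (hrad : 0 < sSup ((fun w : H => ‖w‖) '' A))
    (L μ : ℝ) (hL : 0 < L) (hμ : 0 < μ) (hμL : μ ≤ L)
    (f : H → ℝ) (f' : H → H)
    (hconv : ConvexOn ℝ Set.univ f)
    (hdiff : ∀ w : H, HasGradientAt f (f' w) w)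
    (hLip : ∀ u v : H, ‖f' u - f' v‖ ≤ L * ‖u - v‖)
    (hstrong : ∀ u v : H, f u + ⟪f' u, v - u⟫ + μ / 2 * ‖v - u‖ ^ 2 ≤ f v)
    (xstar : H)
    (hxstar : xstar ∈ closure ((Submodule.span ℝ A : Submodule ℝ H) : Set H))
    (hmin : ∀ w ∈ closure ((Submodule.span ℝ A : Submodule ℝ H) : Set H), f xstar ≤ f w)
    (δ : ℝ) (hδ : δ ∈ Set.Ioc (0:ℝ) 1)
    (x z : ℕ → H)
    (hx0 : x 0 ∈ Submodule.span ℝ A)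
    (hzA : ∀ t, z t ∈ A)
    (hlmo : ∀ t, ⟪f' (x t), z t⟫ ≤ δ * sInf ((fun w => ⟪f' (x t), w⟫) '' A))
    (hupd : ∀ t, x (t + 1) =
        if z t = 0 then x t else x t - (⟪f' (x t), z t⟫ / (L * ‖z t‖ ^ 2)) • z t) :
    ∀ t : ℕ, f (x (t + 1)) - f xstar ≤
      (1 - δ ^ 2 * μ * (mDW A) ^ 2 / (L * (sSup ((fun w : H => ‖w‖) '' A)) ^ 2))
        * (f (x t) - f xstar) := by
  obtain ⟨hδ0, hδ1⟩ := hδ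
  set R := sSup ((fun w : H => ‖w‖) '' A) with hRdef
  set W := mDW A with hWdef
  have hW0 : 0 < W := hmdw
  have hRz : ∀ w ∈ A, ‖w‖ ≤ R := fun w hw => le_csSup (norm_le_rad A hAbdd) ⟨w, hw, rfl⟩
  set K := (Submodule.span ℝ A).topologicalClosure with hKdef
  haveI : CompleteSpace K :=
    (Submodule.isClosed_topologicalClosure _).completeSpace_coe
  have hKset : (K : Set H) = closure ((Submodule.span ℝ A : Submodule ℝ H) : Set H) :=
    Submodule.topologicalClosure_coe _
  have hAK : ∀ w ∈ A, w ∈ K := fun w hw =>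
    Submodule.le_topologicalClosure _ (Submodule.subset_span hw)
  have hxspan : ∀ n, x n ∈ Submodule.span ℝ A := by
    intro n
    induction n with
    | zero => exact hx0
    | succ n ih =>
      rw [hupd n]
      split_ifs with h
      · exact ih
      · exact Submodule.sub_mem _ ih
          (Submodule.smul_mem _ _ (Submodule.subset_span (hzA n)))
  have hxK : ∀ n, x n ∈ K := fun n => Submodule.le_topologicalClosure _ (hxspan n)
  have hxC : ∀ n, x n ∈ closure (((Submodule.span ℝ A : Submodule ℝ H)) : Set H) := by
    intro n; rw [← hKset]; exact hxK n
  have hxstarK : xstar ∈ K := by rw [← SetLike.mem_coe, hKset]; exact hxstar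
  have hε : ∀ n, 0 ≤ f (x n) - f xstar := fun n => sub_nonneg.2 (hmin _ (hxC n))
  intro t
  set p := ((K.orthogonalProjectionOnto (f' (x t)) : K) : H) with hpdef
  have hpK : p ∈ K := SetLike.coe_mem _
  have hproj : ∀ v ∈ K, ⟪f' (x t), v⟫ = ⟪p, v⟫ := by
    intro v hv
    have h : ⟪f' (x t) - p, v⟫ = 0 := Submodule.starProjection_inner_eq_zero (K := K) (f' (x t)) v hv
    rw [inner_sub_left] at h
    linarith
  -- strong convexity bound
  have hstr : 2 * μ * (f (x t) - f xstar) ≤ ‖p‖ ^ 2 := by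
    have h1 := hstrong (x t) xstar
    have hmem : xstar - x t ∈ K := Submodule.sub_mem _ hxstarK (hxK t)
    have h2 : ⟪f' (x t), xstar - x t⟫ = ⟪p, xstar - x t⟫ := hproj _ hmem
    have h3 : |⟪p, xstar - x t⟫| ≤ ‖p‖ * ‖xstar - x t‖ := abs_real_inner_le_norm _ _
    have h4 := (abs_le.1 h3).1
    have h5 : f (x t) - f xstar ≤
        ‖p‖ * ‖xstar - x t‖ - μ / 2 * ‖xstar - x t‖ ^ 2 := by
      rw [h2] at h1; linarith
    nlinarith [sq_nonneg (‖p‖ - μ * ‖xstar - x t‖),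
      mul_le_mul_of_nonneg_left h5 (by positivity : (0:ℝ) ≤ 2 * μ)]
  -- LMO inf bound
  have hinf : sInf ((fun w => ⟪f' (x t), w⟫) '' A) ≤ -(W * ‖p‖) := by
    have himg : (fun w => ⟪f' (x t), w⟫) '' A = (fun w => -⟪-p, w⟫) '' A := by
      apply Set.image_congr
      intro w hw
      rw [inner_neg_left, neg_neg]
      exact hproj w (hAK w hw)
    have hpmem : -p ∈ closure ((Submodule.span ℝ A : Submodule ℝ H) : Set H) := by
      rw [← hKset]
      exact Submodule.neg_mem K hpK
    have hT : W * ‖p‖ ≤ sSup ((fun w => ⟪-p, w⟫) '' A) := by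
      have := width_bound A hA hAbdd hrad (-p) hpmem
      rwa [norm_neg] at this
    have hneg : ((fun w => -⟪-p, w⟫) '' A) = -((fun w => ⟪-p, w⟫) '' A) := by
      rw [show (fun w : H => -⟪-p, w⟫) = (Neg.neg ∘ fun w : H => ⟪-p, w⟫) from rfl,
        Set.image_comp, Set.image_neg_eq_neg]
    rw [himg, hneg, Real.sInf_def, neg_neg]
    exact neg_le_neg hT
  rcases eq_or_ne (z t) 0 with hz | hz
  · -- z t = 0
    have h0 : (0:ℝ) ≤ δ * sInf ((fun w => ⟪f' (x t), w⟫) '' A) := by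
      have h := hlmo t
      rw [hz, inner_zero_right] at h
      exact h
    have hp0 : ‖p‖ = 0 := by
      have h1 := mul_le_mul_of_nonneg_left hinf hδ0.le
      have h2 : ‖p‖ ≤ 0 := by nlinarith [norm_nonneg p, mul_pos hδ0 hW0]
      exact le_antisymm h2 (norm_nonneg p)
    have hε0 : f (x t) - f xstar = 0 := by
      rw [hp0] at hstr
      have : f (x t) - f xstar ≤ 0 := by nlinarith
      exact le_antisymm this (hε t)
    rw [hupd t, if_pos hz, hε0]
    simp
  · -- z t ≠ 0
    have hzn : 0 < ‖z t‖ := norm_pos_iff.2 hz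
    have hd : f (x (t+1)) ≤ f (x t)
        - ⟪f' (x t), z t⟫ ^ 2 / (2 * L * ‖z t‖ ^ 2) := by
      have hx1 : x (t+1) = x t
          + (-(⟪f' (x t), z t⟫ / (L * ‖z t‖ ^ 2))) • z t := by
        rw [hupd t, if_neg hz, sub_eq_add_neg, ← neg_smul]
      rw [hx1]
      have hdl := descent_lemma L hL f f' hdiff hLip (x t)
        ((-(⟪f' (x t), z t⟫ / (L * ‖z t‖ ^ 2))) • z t)
      have e1 : ⟪f' (x t), (-(⟪f' (x t), z t⟫ / (L * ‖z t‖ ^ 2))) • z t⟫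
          = (-(⟪f' (x t), z t⟫ / (L * ‖z t‖ ^ 2))) * ⟪f' (x t), z t⟫ :=
        real_inner_smul_right _ _ _
      have e2 : ‖(-(⟪f' (x t), z t⟫ / (L * ‖z t‖ ^ 2))) • z t‖ ^ 2
          = (⟪f' (x t), z t⟫ / (L * ‖z t‖ ^ 2)) ^ 2 * ‖z t‖ ^ 2 := by
        rw [norm_smul, mul_pow, Real.norm_eq_abs, sq_abs, neg_sq]
      rw [e1, e2] at hdl
      have e3 : f (x t) + (-(⟪f' (x t), z t⟫ / (L * ‖z t‖ ^ 2))) * ⟪f' (x t), z t⟫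
          + L / 2 * ((⟪f' (x t), z t⟫ / (L * ‖z t‖ ^ 2)) ^ 2 * ‖z t‖ ^ 2)
          = f (x t) - ⟪f' (x t), z t⟫ ^ 2 / (2 * L * ‖z t‖ ^ 2) := by
        field_simp
        ring
      rw [e3] at hdl
      exact hdl
    have ha : ⟪f' (x t), z t⟫ ≤ -(δ * (W * ‖p‖)) := by
      have h1 := hlmo t
      have h2 := mul_le_mul_of_nonneg_left hinf hδ0.le
      calc ⟪f' (x t), z t⟫ ≤ δ * sInf ((fun w => ⟪f' (x t), w⟫) '' A) := h1
        _ ≤ δ * -(W * ‖p‖) := h2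
        _ = -(δ * (W * ‖p‖)) := by ring
    have hb0 : 0 ≤ δ * (W * ‖p‖) :=
      mul_nonneg hδ0.le (mul_nonneg hW0.le (norm_nonneg p))
    have ha2 : (δ * (W * ‖p‖)) ^ 2 ≤ ⟪f' (x t), z t⟫ ^ 2 := by
      have k1 : ⟪f' (x t), z t⟫ + δ * (W * ‖p‖) ≤ 0 := by linarith
      have k2 : ⟪f' (x t), z t⟫ - δ * (W * ‖p‖) ≤ 0 := by linarith
      nlinarith [mul_nonneg (neg_nonneg.2 k1) (neg_nonneg.2 k2)]
    have hn2 : ‖z t‖ ^ 2 ≤ R ^ 2 := by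
      nlinarith [hRz (z t) (hzA t), hzn.le]
    have hRpos : 0 < R := hrad
    have t3 : δ ^ 2 * W ^ 2 * (2 * μ * (f (x t) - f xstar)) ≤ ⟪f' (x t), z t⟫ ^ 2 := by
      have t1 := mul_le_mul_of_nonneg_left hstr (by positivity : (0:ℝ) ≤ δ ^ 2 * W ^ 2)
      nlinarith [ha2]
    have key : δ ^ 2 * μ * W ^ 2 / (L * R ^ 2) * (f (x t) - f xstar)
        ≤ ⟪f' (x t), z t⟫ ^ 2 / (2 * L * ‖z t‖ ^ 2) := by
      rw [div_mul_eq_mul_div, div_le_div_iff₀ (by positivity) (by positivity)]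
      calc δ ^ 2 * μ * W ^ 2 * (f (x t) - f xstar) * (2 * L * ‖z t‖ ^ 2)
          = (δ ^ 2 * W ^ 2 * (2 * μ * (f (x t) - f xstar))) * (L * ‖z t‖ ^ 2) := by ring
        _ ≤ ⟪f' (x t), z t⟫ ^ 2 * (L * ‖z t‖ ^ 2) :=
            mul_le_mul_of_nonneg_right t3 (by positivity)
        _ ≤ ⟪f' (x t), z t⟫ ^ 2 * (L * R ^ 2) :=
            mul_le_mul_of_nonneg_left
              (mul_le_mul_of_nonneg_left hn2 hL.le) (sq_nonneg _)
    have expand : (1 - δ ^ 2 * μ * W ^ 2 / (L * R ^ 2)) * (f (x t) - f xstar)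
        = (f (x t) - f xstar) - δ ^ 2 * μ * W ^ 2 / (L * R ^ 2) * (f (x t) - f xstar) := by
      ring
    rw [expand]
    linarith [hd, key]
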